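/- Let F be a field, V a vector space over F, n > 1, and D an n-determinant on V. Then for vectors v_1, …, v_n ∈ V, D(v_1,…,v_n) ≠ 0 if and only if v_1, …, v_n are linearly independent over F. -/

import Mathlib

/-- The "main equation" for a function `D : V^n → F`:
for every `(n+1)`-tuple `v₁, …, vₙ, b`,
`D(v₁,…,vₙ) • b = ∑ₖ D(v₁,…,b,…,vₙ) • vₖ` (the `k`-th summand replaces `vₖ` by `b`). -/
def MainEq (F : Type*) {V : Type*} [Field F] [AddCommGroup V] [Module F V]
    (n : ℕ) (D : (Fin n → V) → F) : Prop :=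
  ∀ (v : Fin n → V) (b : V),
    D v • b = ∑ k : Fin n, D (Function.update v k b) • v k

/-- An `n`-determinant on `V`: a nonzero function `D : V^n → F` satisfying the main
equation, where moreover the dimension of `V` over `F` equals `n`. -/
def IsDeterminant (F V : Type*) [Field F] [AddCommGroup V] [Module F V]
    (n : ℕ) (D : (Fin n → V) → F) : Prop :=
  D ≠ 0 ∧ MainEq F n D ∧ Module.finrank F V = n

/-- `D : V^n → F` is multilinear: additive and homogeneous of degree 1
in each variable separately. -/
def IsMultilinearFn (F : Type*) {V : Type*} [Field F] [AddCommGroup V] [Module F V]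
    (n : ℕ) (D : (Fin n → V) → F) : Prop :=
  (∀ (v : Fin n → V) (k : Fin n) (u w : V),
      D (Function.update v k (u + w))
        = D (Function.update v k u) + D (Function.update v k w)) ∧
  (∀ (v : Fin n → V) (k : Fin n) (c : F) (u : V),
      D (Function.update v k (c • u)) = c * D (Function.update v k u))

/-- `D : V^n → F` is antisymmetric: interchanging any two arguments changes the sign. -/
def IsAntisymmetricFn (F : Type*) {V : Type*} [Field F] [AddCommGroup V] [Module F V]
    (n : ℕ) (D : (Fin n → V) → F) : Prop :=
  ∀ (v : Fin n → V) (i j : Fin n), i ≠ j → D (v ∘ Equiv.swap i j) = - D v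

section Aux

variable {F V : Type*} [Field F] [AddCommGroup V] [Module F V] {n : ℕ}
  {D : (Fin n → V) → F}

/-- If `D v ≠ 0` then `v` is linearly independent. -/
lemma aux_indep (hD : IsDeterminant F V n D) (v : Fin n → V) (hv : D v ≠ 0) :
    LinearIndependent F v := by
  apply linearIndependent_of_top_le_span_of_card_eq_finrank
  · intro b _
    have h := hD.2.1 v b
    have hb : b = (D v)⁻¹ • ∑ k : Fin n, D (Function.update v k b) • v k := by
      rw [← h, smul_smul, inv_mul_cancel₀ hv, one_smul]
    rw [hb]
    exact Submodule.smul_mem _ _ (Submodule.sum_mem _ fun k _ =>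
      Submodule.smul_mem _ _ (Submodule.subset_span (Set.mem_range_self k)))
  · rw [Fintype.card_fin, hD.2.2]

/-- In each slot, `D` is linear. -/
lemma aux_lin (hD : IsDeterminant F V n D) (v : Fin n → V) (k : Fin n) :
    IsLinearMap F (fun b => D (Function.update v k b)) := by
  by_cases h : ∀ b, D (Function.update v k b) = 0
  · constructor <;> intros <;> simp [h]
  push_neg at h
  obtain ⟨b0, hb0⟩ := h
  set u := Function.update v k b0 with hu
  have hind : LinearIndependent F u := aux_indep hD u hb0
  have hcard : Fintype.card (Fin n) = Module.finrank F V := by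
    rw [Fintype.card_fin, hD.2.2]
  have hne : Nonempty (Fin n) := by
    rcases Nat.eq_zero_or_pos n with h0 | h0
    · exfalso
      exact hb0 (by
        have : (Function.update v k b0) = u := rfl
        exact absurd k.2 (by omega))
    · exact ⟨⟨0, h0⟩⟩
  let e : Module.Basis (Fin n) F V := basisOfLinearIndependentOfCardEqFinrank hind hcard
  have he : ⇑e = u := coe_basisOfLinearIndependentOfCardEqFinrank hind hcard
  have key : ∀ b : V, D (Function.update u k b) = D u * e.repr b k := by
    intro b
    have hme : D u • b = ∑ j : Fin n, D (Function.update u j b) • u j := hD.2.1 u b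
    have h2 : D u • b = ∑ j : Fin n, (D u * e.repr b j) • u j := by
      conv_lhs => rw [← e.sum_repr b]
      rw [Finset.smul_sum]
      refine Finset.sum_congr rfl fun j _ => ?_
      rw [he, smul_smul]
    have h3 : ∑ j : Fin n, (D (Function.update u j b) - D u * e.repr b j) • u j = 0 := by
      simp only [sub_smul, Finset.sum_sub_distrib, ← hme, ← h2, sub_self]
    have h4 := Fintype.linearIndependent_iff.mp hind _ h3 k
    exact sub_eq_zero.mp h4
  constructor
  · intro x y
    have hx : Function.update v k x = Function.update u k x := by
      rw [hu, Function.update_idem]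
    have hy : Function.update v k y = Function.update u k y := by
      rw [hu, Function.update_idem]
    have hxy : Function.update v k (x + y) = Function.update u k (x + y) := by
      rw [hu, Function.update_idem]
    rw [hx, hy, hxy, key, key, key, map_add, Finsupp.add_apply]
    ring
  · intro c x
    have hx : Function.update v k x = Function.update u k x := by
      rw [hu, Function.update_idem]
    have hcx : Function.update v k (c • x) = Function.update u k (c • x) := by
      rw [hu, Function.update_idem]
    rw [hx, hcx, key, key, map_smul, Finsupp.smul_apply]
    simp only [smul_eq_mul]
    ring

end Aux

theorem stmt_7 (F V : Type*) [Field F] [AddCommGroup V] [Module F V]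
    (n : ℕ) (hn : 1 < n) (D : (Fin n → V) → F)
    (hD : IsDeterminant F V n D) (v : Fin n → V) :
    D v ≠ 0 ↔ LinearIndependent F v := by
  constructor
  · exact aux_indep hD v
  · intro hli hzero
    have hcard : Fintype.card (Fin n) = Module.finrank F V := by
      rw [Fintype.card_fin, hD.2.2]
    have hne : Nonempty (Fin n) := ⟨⟨0, by omega⟩⟩
    let e : Module.Basis (Fin n) F V := basisOfLinearIndependentOfCardEqFinrank hli hcard
    have he : ⇑e = v := coe_basisOfLinearIndependentOfCardEqFinrank hli hcard
    let g : MultilinearMap F (fun _ : Fin n => V) F :=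
      { toFun := D
        map_update_add' := by
          intro dec m i x y
          have : dec = instDecidableEqFin n := Subsingleton.elim _ _
          subst this
          exact (aux_lin hD m i).map_add x y
        map_update_smul' := by
          intro dec m i c x
          have : dec = instDecidableEqFin n := Subsingleton.elim _ _
          subst this
          rw [(aux_lin hD m i).map_smul c x, smul_eq_mul] }
    let f : V [⋀^Fin n]→ₗ[F] F :=
      { g with
        map_eq_zero_of_eq' := by
          intro w i j hij hne'
          by_contra hw
          have hli' := aux_indep hD w (by exact hw)
          exact hne' (hli'.injective hij) }
    have hfv : f ⇑e = 0 := by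
      show D ⇑e = 0
      rw [he]
      exact hzero
    have hf0 : f = 0 := (AlternatingMap.map_basis_eq_zero_iff e f).mp hfv
    apply hD.1
    funext w
    have hw : f w = 0 := by rw [hf0]; simp
    exact hw
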